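/- If T₁ and T₂ are reduced rooted trees (roots have at least two children), then Q(T₁) = Q(T₂) if and only if the multisets D(T₁) = {d(v) : v ∈ V(T₁)} and D(T₂) = {d(v) : v ∈ V(T₂)} are equal. -/

import Mathlib

open Finset

/-- The q-number `[n]_q = 1 + q + ⋯ + q^{n-1}` as a rational function over ℚ. -/
noncomputable def qnum (n : ℕ) : RatFunc ℚ := ∑ i ∈ Finset.range n, RatFunc.X ^ i

/-- The q-factorial `[n]_q! = ∏_{i=1}^n [i]_q`. -/
noncomputable def qfact (n : ℕ) : RatFunc ℚ := ∏ i ∈ Finset.range n, qnum (i + 1)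

/-- The q-binomial coefficient `[m+n]_q! / ([m]_q! [n]_q!)`. -/
noncomputable def qbinom (m n : ℕ) : RatFunc ℚ := qfact (m + n) / (qfact m * qfact n)

/-- The q-multinomial coefficient of a list of nonnegative integers. -/
noncomputable def qmultinomial (l : List ℕ) : RatFunc ℚ :=
  qfact l.sum / (l.map qfact).prod

/-- Plane rooted trees: a root together with an ordered list of subtrees. -/
inductive PTree where
  | node : List PTree → PTree

namespace PTree

/-- Number of edges of a rooted tree. -/
def edges : PTree → ℕ
  | node ts => (ts.attach.map fun t => edges t.1 + 1).sum
decreasing_by simp only [PTree.node.sizeOf_spec, Nat.add_comm 1]; exact Nat.lt_succ_of_lt (List.sizeOf_lt_of_mem t.2)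

/-- Multiset of descendant counts `d(v)` over the non-root vertices of `T`. -/
def ND : PTree → Multiset ℕ
  | node ts => (ts.attach.map fun t => edges t.1 ::ₘ ND t.1).sum
decreasing_by simp only [PTree.node.sizeOf_spec, Nat.add_comm 1]; exact Nat.lt_succ_of_lt (List.sizeOf_lt_of_mem t.2)

/-- Multiset `D(T) = {d(v) : v ∈ V(T)}` of descendant counts over all vertices. -/
def D (t : PTree) : Multiset ℕ := edges t ::ₘ ND t

/-- The plucking polynomial `Q(T) = [d(r)]_q! / ∏_{v ≠ r} [d(v)+1]_q`. -/
noncomputable def Q (t : PTree) : RatFunc ℚ :=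
  qfact (edges t) / ((ND t).map fun x => qnum (x + 1)).prod

end PTree

namespace PTree
/-- A rooted tree is reduced if its root has at least two children. -/
def reduced : PTree → Prop
  | node ts => 2 ≤ ts.length
end PTree

/-! ### Auxiliary material -/

namespace PluckingAux

open Polynomial

/-- Product of `X^a - 1` over a multiset of naturals. -/
noncomputable def P (M : Multiset ℕ) : ℚ[X] := (M.map fun a => (X : ℚ[X]) ^ a - 1).prod

lemma P_add (M N : Multiset ℕ) : P (M + N) = P M * P N := by
  simp [P, Multiset.prod_add]

lemma monic_factor {a : ℕ} (ha : 0 < a) : ((X : ℚ[X]) ^ a - 1).Monic := by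
  simpa using monic_X_pow_sub_C (1 : ℚ) ha.ne'

lemma dvd_step (M N : Multiset ℕ) (hN : ∀ a ∈ N, 0 < a)
    (h : P M = P N) {m : ℕ} (hm : 0 < m) (hmM : m ∈ M) : ∃ a ∈ N, m ∣ a := by
  set ζ : ℂ := Complex.exp (2 * Real.pi * Complex.I / m) with hζdef
  have hζ : IsPrimitiveRoot ζ m := Complex.isPrimitiveRoot_exp m hm.ne'
  have happ := congrArg (Polynomial.aeval ζ) h
  rw [P, P, map_multiset_prod, map_multiset_prod, Multiset.map_map, Multiset.map_map] at happ
  simp only [Function.comp, map_sub, map_pow, aeval_X, map_one] at happ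
  have h0 : (M.map fun a => ζ ^ a - 1).prod = 0 := by
    apply Multiset.prod_eq_zero
    refine Multiset.mem_map.2 ⟨m, hmM, ?_⟩
    rw [hζ.pow_eq_one, sub_self]
  rw [h0] at happ
  obtain ⟨x, hx1, hx2⟩ := Multiset.mem_map.1 (Multiset.prod_eq_zero_iff.1 happ.symm)
  exact ⟨x, hx1, (hζ.pow_eq_one_iff_dvd x).1 (sub_eq_zero.1 hx2)⟩

lemma multiset_eq_of_P_eq : ∀ (n : ℕ) (M N : Multiset ℕ), Multiset.card M = n →
    (∀ a ∈ M, 0 < a) → (∀ a ∈ N, 0 < a) → P M = P N → M = N := by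
  intro n
  induction n with
  | zero =>
    intro M N hcard hM hN h
    have hM0 : M = 0 := Multiset.card_eq_zero.1 hcard
    subst hM0
    by_contra hN0
    have hN0' : N ≠ 0 := fun h' => hN0 h'.symm
    obtain ⟨a, ha⟩ := Multiset.exists_mem_of_ne_zero hN0'
    obtain ⟨b, hb, -⟩ := dvd_step N 0 (by simp) h.symm (hN a ha) ha
    simp at hb
  | succ n ih =>
    intro M N hcard hM hN h
    have hM0 : M ≠ 0 := by
      intro h0
      rw [h0] at hcard
      simp at hcard
    have hMfin : M.toFinset.Nonempty := by
      obtain ⟨a, ha⟩ := Multiset.exists_mem_of_ne_zero hM0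
      exact ⟨a, Multiset.mem_toFinset.2 ha⟩
    set m := M.toFinset.max' hMfin with hmdef
    have hmM : m ∈ M := Multiset.mem_toFinset.1 (M.toFinset.max'_mem hMfin)
    have hmpos : 0 < m := hM m hmM
    obtain ⟨a, haN, hma⟩ := dvd_step M N hN h hmpos hmM
    have hNfin : N.toFinset.Nonempty := ⟨a, Multiset.mem_toFinset.2 haN⟩
    set k := N.toFinset.max' hNfin with hkdef
    have hkN : k ∈ N := Multiset.mem_toFinset.1 (N.toFinset.max'_mem hNfin)
    obtain ⟨b, hbM, hkb⟩ := dvd_step N M hM h.symm (hN k hkN) hkN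
    have h1 : m ≤ a := Nat.le_of_dvd (hN a haN) hma
    have h2 : a ≤ k := Finset.le_max' _ a (Multiset.mem_toFinset.2 haN)
    have h3 : k ≤ b := Nat.le_of_dvd (hM b hbM) hkb
    have h4 : b ≤ m := Finset.le_max' _ b (Multiset.mem_toFinset.2 hbM)
    have ham : a = m := le_antisymm (h2.trans (h3.trans h4)) h1
    rw [ham] at haN
    have hMe : m ::ₘ M.erase m = M := Multiset.cons_erase hmM
    have hNe : m ::ₘ N.erase m = N := Multiset.cons_erase haN
    rw [P, P, ← hMe, ← hNe, Multiset.map_cons, Multiset.map_cons, Multiset.prod_cons,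
      Multiset.prod_cons] at h
    have hfne : ((X : ℚ[X]) ^ m - 1) ≠ 0 := (monic_factor hmpos).ne_zero
    have h' := mul_left_cancel₀ hfne h
    have herase : M.erase m = N.erase m := by
      refine ih _ _ ?_ ?_ ?_ h'
      · rw [Multiset.card_erase_of_mem hmM, hcard]; rfl
      · exact fun x hx => hM x (Multiset.mem_of_mem_erase hx)
      · exact fun x hx => hN x (Multiset.mem_of_mem_erase hx)
    rw [← hMe, ← hNe, herase]

lemma qnum_eq (n : ℕ) :
    qnum n = algebraMap ℚ[X] (RatFunc ℚ) (∑ i ∈ Finset.range n, X ^ i) := by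
  rw [qnum, map_sum]
  simp [RatFunc.algebraMap_X]

lemma qnum_ne_zero (n : ℕ) : qnum (n + 1) ≠ 0 := by
  rw [qnum_eq]
  apply RatFunc.algebraMap_ne_zero
  intro h0
  have := congrArg (Polynomial.eval (1 : ℚ)) h0
  simp [Polynomial.eval_finset_sum] at this
  exact absurd this (by positivity)

lemma qnum_mul (n : ℕ) :
    qnum n * (RatFunc.X - 1) = algebraMap ℚ[X] (RatFunc ℚ) ((X : ℚ[X]) ^ n - 1) := by
  rw [← geom_sum_mul (X : ℚ[X]) n, map_mul, qnum_eq, map_sub, map_one, RatFunc.algebraMap_X]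

open PTree

/-- Helper for list sums of multisets. -/
lemma card_list_sum (l : List (Multiset ℕ)) :
    Multiset.card l.sum = (l.map Multiset.card).sum := by
  induction l with
  | nil => simp
  | cons a l ih => simp [ih]

lemma mem_list_sum {x : ℕ} {l : List (Multiset ℕ)} : x ∈ l.sum ↔ ∃ s ∈ l, x ∈ s := by
  induction l with
  | nil => simp
  | cons a l ih => simp [Multiset.mem_add, ih]

lemma card_ND : ∀ t : PTree, Multiset.card (ND t) = edges t
  | .node ts => by
    rw [ND, edges, card_list_sum, List.map_map]
    congr 1
    refine List.map_congr_left ?_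
    intro t _
    simp [Function.comp, card_ND t.1]
decreasing_by simp only [PTree.node.sizeOf_spec, Nat.add_comm 1]; exact Nat.lt_succ_of_lt (List.sizeOf_lt_of_mem t.2)

lemma mem_ND_lt : ∀ t : PTree, ∀ d ∈ ND t, d < edges t
  | .node ts => by
    rw [ND, edges]
    intro d hd
    obtain ⟨s, hs, hds⟩ := mem_list_sum.1 hd
    obtain ⟨c, hc, rfl⟩ := List.mem_map.1 hs
    have hdc : d ≤ edges c.1 := by
      rcases Multiset.mem_cons.1 hds with h | h
      · exact le_of_eq h
      · exact le_of_lt (mem_ND_lt c.1 d h)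
    have hmem : edges c.1 + 1 ∈ ts.attach.map fun t => edges t.1 + 1 :=
      List.mem_map_of_mem hc
    have hle := List.single_le_sum (fun (x : ℕ) _ => Nat.zero_le x) _ hmem
    omega
decreasing_by simp only [PTree.node.sizeOf_spec, Nat.add_comm 1]; exact Nat.lt_succ_of_lt (List.sizeOf_lt_of_mem c.2)

lemma reduced_ND_bound (t : PTree) (hred : reduced t) : ∀ d ∈ ND t, d + 1 < edges t := by
  obtain ⟨ts⟩ := t
  intro d hd
  rw [ND] at hd
  rw [edges]
  obtain ⟨s, hs, hds⟩ := mem_list_sum.1 hd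
  obtain ⟨c, hc, rfl⟩ := List.mem_map.1 hs
  have hdc : d ≤ edges c.1 := by
    rcases Multiset.mem_cons.1 hds with h | h
    · exact le_of_eq h
    · exact le_of_lt (mem_ND_lt c.1 d h)
  set l := ts.attach.map (fun t => edges t.1 + 1) with hl
  have hmem : edges c.1 + 1 ∈ l := List.mem_map_of_mem hc
  have hsum : l.sum = (edges c.1 + 1) + (l.erase (edges c.1 + 1)).sum := by
    rw [← List.sum_cons]
    exact (List.perm_cons_erase hmem).sum_eq
  have hlen : 2 ≤ l.length := by
    rw [hl, List.length_map, List.length_attach]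
    exact hred
  have hlen' : 0 < (l.erase (edges c.1 + 1)).length := by
    rw [List.length_erase_of_mem hmem]
    omega
  obtain ⟨y, hy⟩ := List.exists_mem_of_length_pos hlen'
  have hyl : y ∈ l := List.mem_of_mem_erase hy
  have hy1 : 1 ≤ y := by
    rw [hl] at hyl
    obtain ⟨z, _, rfl⟩ := List.mem_map.1 hyl
    omega
  have hy2 : y ≤ (l.erase (edges c.1 + 1)).sum :=
    List.single_le_sum (fun (x : ℕ) _ => Nat.zero_le x) _ hy
  omega

lemma prod_qnum_ne_zero (t : PTree) : ((ND t).map fun x => qnum (x + 1)).prod ≠ 0 := by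
  apply Multiset.prod_ne_zero
  intro h0
  obtain ⟨x, -, hx⟩ := Multiset.mem_map.1 h0
  exact qnum_ne_zero x hx

/-- The key bridge between `Q` and products of `X^a - 1`. -/
lemma Q_mul_eq (t : PTree) :
    Q t * algebraMap ℚ[X] (RatFunc ℚ) (P ((ND t).map (· + 1))) =
      algebraMap ℚ[X] (RatFunc ℚ) (P ((Multiset.range (edges t)).map (· + 1))) := by
  have hB : algebraMap ℚ[X] (RatFunc ℚ) (P ((ND t).map (· + 1))) =
      ((ND t).map fun x => qnum (x + 1)).prod * (RatFunc.X - 1) ^ edges t := by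
    rw [P, Multiset.map_map, map_multiset_prod, Multiset.map_map]
    have hcongr : Multiset.map (⇑(algebraMap ℚ[X] (RatFunc ℚ)) ∘ (fun a => (X : ℚ[X]) ^ a - 1) ∘
        fun x => x + 1) (ND t) =
        Multiset.map (fun x => qnum (x + 1) * (RatFunc.X - 1)) (ND t) :=
      Multiset.map_congr rfl fun x _ => by
        simp only [Function.comp_apply]
        exact (qnum_mul (x + 1)).symm
    rw [hcongr, Multiset.prod_map_mul]
    congr 1
    rw [Multiset.map_const', Multiset.prod_replicate, card_ND]
  have hA : algebraMap ℚ[X] (RatFunc ℚ) (P ((Multiset.range (edges t)).map (· + 1))) =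
      qfact (edges t) * (RatFunc.X - 1) ^ edges t := by
    rw [P, Multiset.map_map, map_multiset_prod, Multiset.map_map]
    rw [qfact, show (RatFunc.X - 1) ^ edges t =
        ∏ _i ∈ Finset.range (edges t), (RatFunc.X - 1) by
      rw [Finset.prod_const, Finset.card_range], ← Finset.prod_mul_distrib]
    rw [Finset.prod_eq_multiset_prod, Finset.range_val]
    refine congrArg Multiset.prod (Multiset.map_congr rfl fun x _ => ?_)
    simp only [Function.comp_apply]
    rw [qnum_mul]
  rw [hB, hA, Q, div_mul_eq_mul_div, div_eq_iff (prod_qnum_ne_zero t)]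
  ring

lemma pos_of_mem_map_succ (M : Multiset ℕ) : ∀ a ∈ M.map (· + 1), 0 < a := by
  intro a ha
  obtain ⟨x, -, rfl⟩ := Multiset.mem_map.1 ha
  omega

lemma range_add_cancel {a b : ℕ} {s₁ s₂ : Multiset ℕ}
    (heq : Multiset.range a + s₂ = Multiset.range b + s₁)
    (hbd : ∀ d ∈ s₂, d + 1 < b) : b ≤ a := by
  by_contra hab
  push_neg at hab
  have hmem : b - 1 ∈ Multiset.range b + s₁ :=
    Multiset.mem_add.2 (Or.inl (Multiset.mem_range.2 (by omega)))
  rw [← heq] at hmem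
  rcases Multiset.mem_add.1 hmem with h | h
  · have := Multiset.mem_range.1 h
    omega
  · have := hbd _ h
    omega

end PluckingAux

open PTree PluckingAux in
/-- For reduced rooted trees (roots with at least two children), the plucking polynomials
agree iff the multisets of descendant counts agree. -/
theorem Q_eq_iff_D_eq (t₁ t₂ : PTree) (h₁ : reduced t₁) (h₂ : reduced t₂) :
    Q t₁ = Q t₂ ↔ D t₁ = D t₂ := by
  constructor
  · intro hQ
    have hq1 := Q_mul_eq t₁
    have hq2 := Q_mul_eq t₂
    set φ := algebraMap (Polynomial ℚ) (RatFunc ℚ) with hφ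
    have h3 : P ((Multiset.range (edges t₁)).map (· + 1)) * P ((ND t₂).map (· + 1)) =
        P ((Multiset.range (edges t₂)).map (· + 1)) * P ((ND t₁).map (· + 1)) := by
      apply RatFunc.algebraMap_injective
      rw [map_mul, map_mul, ← hq1, ← hq2, hQ]
      ring
    rw [← P_add, ← P_add, ← Multiset.map_add, ← Multiset.map_add] at h3
    have h5 : Multiset.range (edges t₁) + ND t₂ = Multiset.range (edges t₂) + ND t₁ := by
      apply Multiset.map_injective (f := (· + 1)) (add_left_injective 1)
      exact multiset_eq_of_P_eq _ _ _ rfl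
        (pos_of_mem_map_succ _) (pos_of_mem_map_succ _) h3
    have hb₁ := reduced_ND_bound t₁ h₁
    have hb₂ := reduced_ND_bound t₂ h₂
    have he : edges t₁ = edges t₂ :=
      le_antisymm (range_add_cancel h5.symm hb₁) (range_add_cancel h5 hb₂)
    rw [he] at h5
    have hnd : ND t₂ = ND t₁ := by
      exact add_left_cancel h5
    rw [D, D, he, hnd]
  · intro hD
    have hcard := congrArg Multiset.card hD
    rw [D, D, Multiset.card_cons, Multiset.card_cons, card_ND, card_ND] at hcard
    have he : edges t₁ = edges t₂ := by omega
    have hnd : ND t₁ = ND t₂ := by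
      rw [D, D, he] at hD
      exact (Multiset.cons_inj_right _).1 hD
    rw [Q, Q, he, hnd]
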